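/- If a graph G has at most 5 vertices, then the P3-isolation number of G is at most 1. -/
import Mathlib


open SimpleGraph

/-- `G` contains a copy of the 3-vertex path as a (not necessarily induced) subgraph. -/
def containsP3 {V : Type*} (G : SimpleGraph V) : Prop :=
  ∃ f : Fin 3 → V, Function.Injective f ∧
    ∀ a b, (SimpleGraph.pathGraph 3).Adj a b → G.Adj (f a) (f b)

/-- The closed neighbourhood `N[D]` of a set of vertices `D`. -/
def closedNbhd {V : Type*} (G : SimpleGraph V) (D : Set V) : Set V :=
  {v | v ∈ D ∨ ∃ d ∈ D, G.Adj d v}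

/-- `D` is a `P3`-isolating set of `G`: `G - N[D]` contains no copy of `P3`. -/
def IsP3Isolating {V : Type*} (G : SimpleGraph V) (D : Set V) : Prop :=
  ¬ containsP3 (G.induce (closedNbhd G D)ᶜ)

/-- The `P3`-isolation number `ι(G, P3)`. -/
noncomputable def iotaP3 {V : Type*} (G : SimpleGraph V) : ℕ :=
  sInf {n | ∃ D : Finset V, D.card = n ∧ IsP3Isolating G ↑D}

/-- If a graph `G` has at most `5` vertices, then `ι(G, P3) ≤ 1`. -/
theorem stmt2 {V : Type*} [Fintype V] (G : SimpleGraph V) (h : Fintype.card V ≤ 5) :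
    iotaP3 G ≤ 1 := by
  classical
  by_cases hc : containsP3 G
  · obtain ⟨f, hfinj, hf⟩ := hc
    have h10 : G.Adj (f 1) (f 0) := hf 1 0 (by simp [pathGraph_adj])
    have h12 : G.Adj (f 1) (f 2) := hf 1 2 (by simp [pathGraph_adj])
    have hmem : (1 : ℕ) ∈ {n | ∃ D : Finset V, D.card = n ∧ IsP3Isolating G ↑D} := by
      refine ⟨{f 1}, by simp, ?_⟩
      rintro ⟨g, hginj, hg⟩
      have hcnb : ∀ i : Fin 3, f i ∈ closedNbhd G ↑({f 1} : Finset V) := by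
        intro i
        fin_cases i
        · exact Or.inr ⟨f 1, by simp, h10⟩
        · exact Or.inl (by simp)
        · exact Or.inr ⟨f 1, by simp, h12⟩
      have hinj : Function.Injective
          (Sum.elim f (fun j : Fin 3 => (g j : V))) := by
        rintro (a | a) (b | b) hab
        · simpa using hfinj hab
        · exfalso
          simp only [Sum.elim_inl, Sum.elim_inr] at hab
          have := (g b).2
          rw [← hab] at this
          exact this (hcnb a)
        · exfalso
          simp only [Sum.elim_inl, Sum.elim_inr] at hab
          have := (g a).2
          rw [hab] at this
          exact this (hcnb b)
        · simp only [Sum.elim_inr] at hab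
          apply congrArg Sum.inr
          apply hginj
          exact Subtype.val_injective hab
      have hcard := Fintype.card_le_of_injective _ hinj
      simp [Fintype.card_sum] at hcard
      omega
    exact Nat.sInf_le hmem
  · have hmem : (0 : ℕ) ∈ {n | ∃ D : Finset V, D.card = n ∧ IsP3Isolating G ↑D} := by
      refine ⟨∅, by simp, ?_⟩
      rintro ⟨g, hginj, hg⟩
      exact hc ⟨fun j => (g j : V), fun a b hab => hginj (Subtype.ext hab),
        fun a b hab => hg a b hab⟩
    exact le_trans (Nat.sInf_le hmem) (by norm_num)
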